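/- Let m ≥ 1, let Σ be an m×m positive definite real matrix, and let φ̂ ∈ ℝ^m. Define the (1+m)×(1+m) symmetric block matrix Y with top-left 1×1 block φ̂ᵀ Σ⁻¹ φ̂, top-right 1×m block −(Σ⁻¹ φ̂)ᵀ, bottom-left m×1 block −Σ⁻¹ φ̂, and bottom-right m×m block Σ⁻¹. Then: (i) Y is positive semidefinite; (ii) rank(Y) = m; (iii) Y annihilates the vector v := (1, φ̂) ∈ ℝ^{1+m}, i.e., Y v = 0 and ⟨v vᵀ, Y⟩ = 0; and (iv) for every w ∈ ℝ^m, (1, w)ᵀ Y (1, w) = (w − φ̂)ᵀ Σ⁻¹ (w − φ̂). -/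

import Mathlib

open Matrix

/-- forward direction of Theorem 5.  The dual certificate matrix
`Y = [[φ̂ᵀ Σ⁻¹ φ̂, −(Σ⁻¹ φ̂)ᵀ], [−Σ⁻¹ φ̂, Σ⁻¹]]` built from an SOS belief is PSD,
has rank `m`, annihilates `v = (1, φ̂)` (so `Y v = 0` and `⟨v vᵀ, Y⟩ = 0`), and its
quadratic form on `(1, w)` is `(w − φ̂)ᵀ Σ⁻¹ (w − φ̂)`. -/
theorem sos_belief_dual_certificate {m : ℕ} (hm : 1 ≤ m)
    (Sg : Matrix (Fin m) (Fin m) ℝ) (hSg : Sg.PosDef)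
    (φh : Fin m → ℝ)
    (Y : Matrix (Unit ⊕ Fin m) (Unit ⊕ Fin m) ℝ)
    (hY : Y = fromBlocks
      (Matrix.of fun _ _ => φh ⬝ᵥ (Sg⁻¹).mulVec φh)
      (Matrix.of fun _ j => -((Sg⁻¹).mulVec φh) j)
      (Matrix.of fun i _ => -((Sg⁻¹).mulVec φh) i)
      (Sg⁻¹))
    (v : Unit ⊕ Fin m → ℝ) (hv : v = Sum.elim (fun _ => (1 : ℝ)) φh) :
    Y.PosSemidef ∧
    Y.rank = m ∧
    Y.mulVec v = 0 ∧
    trace ((vecMulVec v v)ᵀ * Y) = 0 ∧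
    (∀ w : Fin m → ℝ,
      (Sum.elim (fun _ => (1 : ℝ)) w) ⬝ᵥ Y.mulVec (Sum.elim (fun _ => (1 : ℝ)) w) =
        (w - φh) ⬝ᵥ (Sg⁻¹).mulVec (w - φh)) := by
  set A := Sg⁻¹ with hAdef
  have hA : A.PosDef := hSg.inv
  have hAH : Aᵀ = A := hA.isHermitian
  have hsym : ∀ u w : Fin m → ℝ, u ⬝ᵥ A *ᵥ w = w ⬝ᵥ A *ᵥ u := by
    intro u w
    calc u ⬝ᵥ A *ᵥ w = u ⬝ᵥ Aᵀ *ᵥ w := by rw [hAH]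
      _ = u ⬝ᵥ w ᵥ* A := by rw [mulVec_transpose]
      _ = (w ᵥ* A) ⬝ᵥ u := dotProduct_comm _ _
      _ = w ⬝ᵥ A *ᵥ u := (dotProduct_mulVec _ _ _).symm
  -- the key quadratic form identity
  have key : ∀ (a : ℝ) (x : Fin m → ℝ),
      Sum.elim (fun _ => a) x ⬝ᵥ Y *ᵥ Sum.elim (fun _ => a) x
        = (x - a • φh) ⬝ᵥ A *ᵥ (x - a • φh) := by
    intro a x
    have h1 : (x - a • φh) ⬝ᵥ A *ᵥ (x - a • φh)
        = x ⬝ᵥ A *ᵥ x - a * (x ⬝ᵥ A *ᵥ φh) - a * (φh ⬝ᵥ A *ᵥ x)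
          + a * (a * (φh ⬝ᵥ A *ᵥ φh)) := by
      simp only [mulVec_sub, mulVec_smul, sub_dotProduct, dotProduct_sub,
        dotProduct_smul, smul_dotProduct, smul_eq_mul]
      ring
    rw [hY, fromBlocks_mulVec, h1, hsym φh x]
    simp only [Sum.elim_comp_inl, Sum.elim_comp_inr, sumElim_dotProduct_sumElim,
      dotProduct_add]
    have hu1 : (fun _ : Unit => a) ⬝ᵥ
        ((Matrix.of fun _ _ => φh ⬝ᵥ A *ᵥ φh : Matrix Unit Unit ℝ) *ᵥ fun _ => a) =
        a * (a * (φh ⬝ᵥ A *ᵥ φh)) := by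
      simp only [dotProduct, mulVec, Matrix.of_apply, Finset.univ_unique,
        Finset.sum_singleton]
      ring
    have hu2 : (fun _ : Unit => a) ⬝ᵥ
        ((Matrix.of fun _ j => -(A *ᵥ φh) j : Matrix Unit (Fin m) ℝ) *ᵥ x) =
          -(a * (x ⬝ᵥ A *ᵥ φh)) := by
      simp only [dotProduct, mulVec, Matrix.of_apply, Finset.univ_unique,
        Finset.sum_singleton, Finset.mul_sum, ← Finset.sum_neg_distrib]
      refine Finset.sum_congr rfl fun i _ => ?_
      rw [Finset.sum_mul, Finset.mul_sum]
      exact Finset.sum_congr rfl fun j _ => by ring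
    have hu3 : x ⬝ᵥ ((Matrix.of fun i _ => -(A *ᵥ φh) i : Matrix (Fin m) Unit ℝ)
          *ᵥ fun _ : Unit => a) = -(a * (x ⬝ᵥ A *ᵥ φh)) := by
      simp only [dotProduct, mulVec, Matrix.of_apply, Finset.univ_unique,
        Finset.sum_singleton, Finset.mul_sum, ← Finset.sum_neg_distrib]
      refine Finset.sum_congr rfl fun i _ => ?_
      rw [Finset.sum_mul, Finset.mul_sum]
      exact Finset.sum_congr rfl fun j _ => by ring
    rw [hu1, hu2, hu3]
    ring
  -- hermitian
  have hherm : Y.IsHermitian := by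
    have : ∀ i j, A j i = A i j := by
      intro i j
      conv_lhs => rw [← hAH]
      rfl
    ext i j
    rcases i with i | i <;> rcases j with j | j <;>
      simp [hY, fromBlocks, conjTranspose_apply, this]
  -- Y v = 0
  have hYv : Y *ᵥ v = 0 := by
    rw [hY, hv, fromBlocks_mulVec]
    funext i
    rcases i with i | i <;>
      simp [mulVec, dotProduct, mul_comm]
  have hPSD : Y.PosSemidef := by
    refine posSemidef_iff_dotProduct_mulVec.mpr ⟨hherm, fun x => ?_⟩
    have hx : x = Sum.elim (fun _ => x (Sum.inl ())) (x ∘ Sum.inr) := by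
      funext i; rcases i with ⟨⟩ | i <;> rfl
    rw [star_trivial]
    rw [hx, key]
    have := hA.posSemidef.dotProduct_mulVec_nonneg ((x ∘ Sum.inr) - x (Sum.inl ()) • φh)
    rwa [star_trivial] at this
  refine ⟨hPSD, ?_, hYv, ?_, ?_⟩
  · -- rank
    have hAU : IsUnit A := by
      rw [Matrix.isUnit_iff_isUnit_det]
      exact hA.det_pos.ne'.isUnit
    -- lower bound
    set E : Matrix (Unit ⊕ Fin m) (Fin m) ℝ :=
      Matrix.of (fun i j => if i = Sum.inr j then (1 : ℝ) else 0) with hE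
    have hEYE : Eᵀ * (Y * E) = A := by
      ext i j
      have h1 : ∀ p, (Y * E) p j = Y p (Sum.inr j) := by
        intro p
        simp [mul_apply, hE, Fintype.sum_sum_type]
      simp only [mul_apply, transpose_apply, h1, hE, Matrix.of_apply,
        Fintype.sum_sum_type]
      simp [hY, fromBlocks]
    have hlow : m ≤ Y.rank := by
      have h1 : A.rank = m := by
        rw [Matrix.rank_of_isUnit A hAU, Fintype.card_fin]
      calc m = (Eᵀ * (Y * E)).rank := by rw [hEYE, h1]
        _ ≤ (Y * E).rank := Matrix.rank_mul_le_right _ _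
        _ ≤ Y.rank := Matrix.rank_mul_le_left _ _
    -- upper bound
    set B : Matrix (Unit ⊕ Fin m) Unit ℝ := Matrix.of (fun i _ => v i) with hB
    have hYB : Y * B = 0 := by
      ext i u
      have : (Y * B) i u = (Y *ᵥ v) i := by
        simp [mul_apply, hB, mulVec, dotProduct]
      rw [this, hYv]
      rfl
    have hsum := Matrix.rank_add_rank_le_card_of_mul_eq_zero hYB
    have hcard : Fintype.card (Unit ⊕ Fin m) = m + 1 := by
      simp [Fintype.card_sum]; ring
    have hBrank : 1 ≤ B.rank := by
      set R : Matrix Unit (Unit ⊕ Fin m) ℝ :=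
        Matrix.of (fun _ i => if i = Sum.inl () then (1 : ℝ) else 0) with hR
      have hRB : R * B = 1 := by
        ext u u'
        simp [mul_apply, hR, hB, hv, Fintype.sum_sum_type, Matrix.one_apply]
      calc 1 = (1 : Matrix Unit Unit ℝ).rank := by
              rw [Matrix.rank_one]; simp
        _ = (R * B).rank := by rw [hRB]
        _ ≤ B.rank := Matrix.rank_mul_le_right _ _
    rw [hcard] at hsum
    omega
  · -- trace
    have : trace ((vecMulVec v v)ᵀ * Y) = v ⬝ᵥ (Y *ᵥ v) := by
      simp only [trace, diag, mul_apply, transpose_apply, vecMulVec_apply,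
        dotProduct, mulVec, Finset.mul_sum]
      rw [Finset.sum_comm]
      apply Finset.sum_congr rfl
      intro i _
      apply Finset.sum_congr rfl
      intro k _
      ring
    rw [this, hYv]
    simp
  · intro w
    have := key 1 w
    rwa [one_smul] at this
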